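/- (Lemma 4.3.) Let A ⊆ ℝᵐ be open, B a finite-dimensional smooth manifold without boundary, H ∈ Matrix (Fin m) (Fin m) ℝ a constant nilpotent matrix, p ∈ A, K ⊆ B compact, and h : A × B → ℝ a smooth function such that dh vanishes on Ker H and dh∘H is closed along the fibers. Then there exist an open set U with p ∈ U ⊆ A, an open set V with K ⊆ V ⊆ B, and a smooth function φ : U × V → ℝ such that: (I) Hᵀ·∇_zφ(z,u) = ∇_z h(z,u) on U × V (i.e. dφ∘H = dh along the fibers); (II) φ(p,u) = 0 for every u ∈ V, and ∇_zφ(p,u) = 0 for every u ∈ V with ∇_z h(p,u) = 0. -/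

import Mathlib

set_option synthInstance.maxHeartbeats 1000000
set_option maxHeartbeats 1000000

open Matrix Manifold Set MeasureTheory intervalIntegral Metric
open scoped ContDiff

/-- Gradient in the `z`-variables of a function on `ℝᵐ × B`. -/
noncomputable def gradZb {m : ℕ} {B : Type*} (g : (Fin m → ℝ) × B → ℝ)
    (z : Fin m → ℝ) (u : B) : Fin m → ℝ :=
  fun i => fderiv ℝ (fun w => g (w, u)) z (Pi.single i 1)

section Aux

variable {P F : Type} [NormedAddCommGroup P] [NormedSpace ℝ P] [FiniteDimensional ℝ P]
  [NormedAddCommGroup F] [NormedSpace ℝ F] [CompleteSpace F]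

/-- Differentiation under the interval integral sign, for an integrand smooth on an
open set `W ×ˢ T`. -/
lemma hasFDerivAt_parametric_intervalIntegral
    {Ψ : P × ℝ → F} {Ψ' : P × ℝ → P →L[ℝ] F} {W : Set P} {T : Set ℝ} {a b : ℝ}
    (hW : IsOpen W) (hab : Set.uIcc a b ⊆ T)
    (hΨcont : ContinuousOn Ψ (W ×ˢ T))
    (hΨ'cont : ContinuousOn Ψ' (W ×ˢ T))
    (hΨ' : ∀ x ∈ W ×ˢ T, HasFDerivAt (fun q => Ψ (q, x.2)) (Ψ' x) x.1)
    {p₀ : P} (hp₀ : p₀ ∈ W) :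
    IntervalIntegrable (fun t => Ψ' (p₀, t)) MeasureTheory.volume a b ∧
    IntervalIntegrable (fun t => Ψ (p₀, t)) MeasureTheory.volume a b ∧
    HasFDerivAt (fun q => ∫ t in a..b, Ψ (q, t)) (∫ t in a..b, Ψ' (p₀, t)) p₀ := by
  obtain ⟨ε, hε, hball⟩ : ∃ ε > 0, closedBall p₀ ε ⊆ W := by
    rcases Metric.isOpen_iff.mp hW p₀ hp₀ with ⟨r, hr, hrsub⟩
    exact ⟨r / 2, by linarith, (closedBall_subset_ball (by linarith)).trans hrsub⟩
  have hKc : IsCompact (closedBall p₀ ε ×ˢ Set.uIcc a b) :=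
    (isCompact_closedBall _ _).prod isCompact_uIcc
  have hKsub : (closedBall p₀ ε ×ˢ Set.uIcc a b) ⊆ W ×ˢ T :=
    Set.prod_mono hball hab
  obtain ⟨M, hM⟩ := hKc.exists_bound_of_continuousOn (hΨ'cont.mono hKsub)
  have hcont_slice : ∀ q ∈ W, ContinuousOn (fun t => Ψ (q, t)) (Set.uIcc a b) := by
    intro q hq
    exact hΨcont.comp (Continuous.continuousOn (by fun_prop))
      (fun t ht => ⟨hq, hab ht⟩)
  have hΨ'int : IntervalIntegrable (fun t => Ψ' (p₀, t)) MeasureTheory.volume a b := by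
    apply ContinuousOn.intervalIntegrable
    exact hΨ'cont.comp (Continuous.continuousOn (by fun_prop))
      (fun t ht => ⟨hp₀, hab ht⟩)
  have hΨint : IntervalIntegrable (fun t => Ψ (p₀, t)) MeasureTheory.volume a b :=
    (hcont_slice p₀ hp₀).intervalIntegrable
  refine ⟨hΨ'int, hΨint, ?_⟩
  apply intervalIntegral.hasFDerivAt_integral_of_dominated_of_fderiv_le
    (F := fun q t => Ψ (q, t)) (F' := fun q t => Ψ' (q, t)) (bound := fun _ => M) (Metric.ball_mem_nhds p₀ hε)
  · filter_upwards [hW.mem_nhds hp₀] with q hq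
    exact ((hcont_slice q hq).mono uIoc_subset_uIcc).aestronglyMeasurable measurableSet_uIoc
  · exact hΨint
  · exact (((hΨ'cont.comp (Continuous.continuousOn (by fun_prop))
      (fun t (ht : t ∈ Set.uIcc a b) => ⟨hp₀, hab ht⟩)).mono
        uIoc_subset_uIcc).aestronglyMeasurable measurableSet_uIoc)
  · filter_upwards with t ht q hq
    exact hM (q, t) ⟨ball_subset_closedBall hq, uIoc_subset_uIcc ht⟩
  · exact intervalIntegrable_const
  · filter_upwards with t ht q hq
    exact hΨ' (q, t) ⟨hball (ball_subset_closedBall hq), hab (uIoc_subset_uIcc ht)⟩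

lemma contDiffOn_parametric_intervalIntegral_nat
    {W : Set P} {T : Set ℝ} {a b : ℝ}
    (hW : IsOpen W) (hT : IsOpen T) (hab : Set.uIcc a b ⊆ T) :
    ∀ (n : ℕ) {F : Type} [NormedAddCommGroup F] [NormedSpace ℝ F] [CompleteSpace F],
    ∀ (Ψ : P × ℝ → F), ContDiffOn ℝ n Ψ (W ×ˢ T) →
      ContDiffOn ℝ n (fun q => ∫ t in a..b, Ψ (q, t)) W := by
  intro n
  induction n with
  | zero =>
    intro F _ _ _ Ψ hΨ
    rw [show ((0:ℕ):WithTop ℕ∞) = 0 from rfl, contDiffOn_zero] at hΨ ⊢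
    -- clamp the time variable
    set τ : ℝ → ℝ := fun t => min (max t (min a b)) (max a b) with hτ
    have hτcont : Continuous τ := by fun_prop
    have hτmem : ∀ t, τ t ∈ Set.uIcc a b := by
      intro t
      constructor
      · exact le_min (le_max_right _ _) (min_le_max)
      · exact min_le_right _ _
    have hτid : ∀ t ∈ Set.uIcc a b, τ t = t := by
      intro t ht
      have h1 : min a b ≤ t := ht.1
      have h2 : t ≤ max a b := ht.2
      simp [hτ, max_eq_left h1, min_eq_left h2]
    have key : Continuous fun w : W => ∫ t in a..b, Ψ (w.1, τ t) := by
      apply intervalIntegral.continuous_parametric_intervalIntegral_of_continuous'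
        (f := fun (w : W) t => Ψ (w.1, τ t))
      apply hΨ.comp_continuous (by fun_prop)
      intro ⟨w, t⟩
      exact ⟨w.2, hab (hτmem t)⟩
    rw [continuousOn_iff_continuous_restrict]
    apply key.congr
    intro w
    apply intervalIntegral.integral_congr
    intro t ht
    simp only [Set.restrict_apply]
    rw [hτid t ht]
  | succ n ih =>
    intro F _ _ _ Ψ hΨ
    have hWT : IsOpen (W ×ˢ T) := hW.prod hT
    have hdiffable : DifferentiableOn ℝ Ψ (W ×ˢ T) :=
      hΨ.differentiableOn (by exact_mod_cast Nat.succ_ne_zero n)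
    have hdiff : ∀ x ∈ W ×ˢ T, HasFDerivAt Ψ (fderiv ℝ Ψ x) x := fun x hx =>
      (hdiffable.differentiableAt (hWT.mem_nhds hx)).hasFDerivAt
    set Φ : P × ℝ → (P →L[ℝ] F) :=
      fun x => (fderiv ℝ Ψ x).comp (ContinuousLinearMap.inl ℝ P ℝ) with hΦdef
    have hΦ : ContDiffOn ℝ n Φ (W ×ˢ T) := by
      apply ContDiffOn.clm_comp _ contDiffOn_const
      apply hΨ.fderiv_of_isOpen hWT
      exact_mod_cast le_refl _
    have hΨpart : ∀ x ∈ W ×ˢ T, HasFDerivAt (fun q => Ψ (q, x.2)) (Φ x) x.1 := by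
      intro x hx
      exact (hdiff x hx).comp x.1 (hasFDerivAt_prodMk_left x.1 x.2)
    have hDUI := fun (p₀ : P) (hp₀ : p₀ ∈ W) =>
      hasFDerivAt_parametric_intervalIntegral hW hab hΨ.continuousOn hΦ.continuousOn
        hΨpart hp₀
    have hg : ContDiffOn ℝ n (fun q => ∫ t in a..b, Φ (q, t)) W := ih (F := P →L[ℝ] F) Φ hΦ
    have : ((n + 1 : ℕ) : WithTop ℕ∞) = (n : WithTop ℕ∞) + 1 := by exact_mod_cast rfl
    rw [this, contDiffOn_succ_iff_fderiv_of_isOpen hW]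
    refine ⟨fun p hp => ((hDUI p hp).2.2).differentiableAt.differentiableWithinAt, ?_, ?_⟩
    · intro hω
      exact absurd hω (by exact_mod_cast WithTop.natCast_ne_top n)
    · apply hg.congr
      intro p hp
      exact ((hDUI p hp).2.2).fderiv

lemma contDiffOn_parametric_intervalIntegral_top
    {W : Set P} {T : Set ℝ} {a b : ℝ}
    (hW : IsOpen W) (hT : IsOpen T) (hab : Set.uIcc a b ⊆ T)
    {F : Type} [NormedAddCommGroup F] [NormedSpace ℝ F] [CompleteSpace F]
    {Ψ : P × ℝ → F} (hΨ : ContDiffOn ℝ (⊤:ℕ∞) Ψ (W ×ˢ T)) :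
    ContDiffOn ℝ (⊤:ℕ∞) (fun q => ∫ t in a..b, Ψ (q, t)) W := by
  have : ((⊤:ℕ∞) : WithTop ℕ∞) = ∞ := rfl
  rw [this] at hΨ ⊢
  rw [contDiffOn_infty] at hΨ ⊢
  exact fun n => contDiffOn_parametric_intervalIntegral_nat hW hT hab n Ψ (hΨ n)


lemma clm_eq_sum_single {m : ℕ} (f : (Fin m → ℝ) →L[ℝ] ℝ) (v : Fin m → ℝ) :
    f v = ∑ i, v i * f (Pi.single i 1) := by
  conv_lhs => rw [← Finset.univ_sum_single v]
  rw [map_sum]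
  congr 1; funext i
  have h : Pi.single i (v i) = v i • (Pi.single i (1:ℝ) : Fin m → ℝ) := by
    rw [← Pi.single_smul, smul_eq_mul, mul_one]
  rw [h, _root_.map_smul, smul_eq_mul]

lemma mulVec_transpose_entry {m : ℕ} (H : Matrix (Fin m) (Fin m) ℝ) (g : Fin m → ℝ) (i : Fin m) :
    Hᵀ.mulVec g i = g ⬝ᵥ H.mulVec (Pi.single i 1) := by
  simp [Matrix.mulVec, dotProduct, Matrix.transpose_apply, Pi.single_apply, mul_comm]

lemma clm_mulVec_sum {m : ℕ} (H : Matrix (Fin m) (Fin m) ℝ) (T : (Fin m → ℝ) →L[ℝ] ℝ)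
    (w : Fin m → ℝ) : T (H.mulVec w) = ∑ i, w i * T (H.mulVec (Pi.single i 1)) := by
  have := clm_eq_sum_single
    (T.comp (LinearMap.toContinuousLinearMap (Matrix.mulVecLin H))) w
  simpa using this

lemma hclosed_translate {m : ℕ} {A : Set (Fin m → ℝ)} (hA : IsOpen A)
    {H : Matrix (Fin m) (Fin m) ℝ} {f : (Fin m → ℝ) → ℝ}
    (hf : ContDiffOn ℝ (⊤:ℕ∞) f A) {z : Fin m → ℝ} (hz : z ∈ A)
    (hc : ∀ v w : Fin m → ℝ,
      (fderiv ℝ (fun z' => Hᵀ.mulVec (fun i => fderiv ℝ f z' (Pi.single i 1))) z v) ⬝ᵥ w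
        = (fderiv ℝ (fun z' => Hᵀ.mulVec (fun i => fderiv ℝ f z' (Pi.single i 1))) z w) ⬝ᵥ v) :
    ∀ v w, fderiv ℝ (fderiv ℝ f) z v (H.mulVec w) = fderiv ℝ (fderiv ℝ f) z w (H.mulVec v) := by
  have htop : ((⊤:ℕ∞) : WithTop ℕ∞) = ∞ := rfl
  rw [htop] at hf
  set Df : (Fin m → ℝ) → (Fin m → ℝ) →L[ℝ] ℝ := fderiv ℝ f with hDfdef
  set D2 : (Fin m → ℝ) → (Fin m → ℝ) →L[ℝ] ((Fin m → ℝ) →L[ℝ] ℝ) := fderiv ℝ Df with hD2def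
  have hinfty1 : (∞ : WithTop ℕ∞) + 1 ≤ ∞ := by simp
  have hDf : ContDiffOn ℝ ∞ Df A := hf.fderiv_of_isOpen hA hinfty1
  have hasD2 : HasFDerivAt Df (D2 z) z :=
    ((hDf.differentiableOn (by simp)).differentiableAt (hA.mem_nhds hz)).hasFDerivAt
  set L : (Fin m → ℝ) →L[ℝ] (Fin m → ℝ) :=
    ContinuousLinearMap.pi (fun i => (D2 z).flip (H.mulVec (Pi.single i 1))) with hLdef
  have hQ : HasFDerivAt (fun z' => Hᵀ.mulVec (fun i => Df z' (Pi.single i 1))) L z := by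
    apply hasFDerivAt_pi''
    intro i
    have hcomp : HasFDerivAt (fun z' => Df z' (H.mulVec (Pi.single i 1)))
        ((ContinuousLinearMap.apply ℝ ℝ (H.mulVec (Pi.single i 1))).comp (D2 z)) z :=
      (ContinuousLinearMap.apply ℝ ℝ (H.mulVec (Pi.single i 1))).hasFDerivAt.comp z hasD2
    have heq : (fun z' => Hᵀ.mulVec (fun j => Df z' (Pi.single j 1)) i)
        = fun z' => Df z' (H.mulVec (Pi.single i 1)) := by
      funext z'
      rw [mulVec_transpose_entry]
      rw [clm_eq_sum_single (Df z') (H.mulVec (Pi.single i 1))]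
      simp [dotProduct, mul_comm]
    rw [heq]
    exact hcomp
  have hfd : fderiv ℝ (fun z' => Hᵀ.mulVec (fun i => Df z' (Pi.single i 1))) z = L := hQ.fderiv
  intro v w
  have hcvw := hc v w
  rw [hfd] at hcvw
  have key : ∀ a b : Fin m → ℝ, (L a) ⬝ᵥ b = D2 z a (H.mulVec b) := by
    intro a b
    rw [clm_mulVec_sum H (D2 z a) b]
    simp only [dotProduct, hLdef, ContinuousLinearMap.pi_apply,
      ContinuousLinearMap.flip_apply]
    exact Finset.sum_congr rfl fun i _ => (mul_comm _ _).symm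
  rw [key, key] at hcvw
  exact hcvw

lemma key_slice {m : ℕ} {A : Set (Fin m → ℝ)} (hA : IsOpen A)
    {H : Matrix (Fin m) (Fin m) ℝ} {p : Fin m → ℝ}
    {ρc Gc : (Fin m → ℝ) →L[ℝ] (Fin m → ℝ)}
    (hHG : ∀ v, H.mulVec (Gc v) = ρc v) (hρH : ∀ v, ρc (H.mulVec v) = H.mulVec v)
    {f : (Fin m → ℝ) → ℝ} (hf : ContDiffOn ℝ (⊤:ℕ∞) f A)
    (hker : ∀ z ∈ A, ∀ v, H.mulVec v = 0 → fderiv ℝ f z v = 0)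
    (hclosed : ∀ z ∈ A, ∀ v w, fderiv ℝ (fderiv ℝ f) z v (H.mulVec w)
      = fderiv ℝ (fderiv ℝ f) z w (H.mulVec v))
    {U : Set (Fin m → ℝ)} (hUopen : IsOpen U) (hUA : U ⊆ A)
    (hcA : ∀ z ∈ U, ∀ t : ℝ, |t| ≤ 2 → (z + (t-1) • ρc (z - p)) ∈ A)
    {z : Fin m → ℝ} (hz : z ∈ U) :
    ∃ L : (Fin m → ℝ) →L[ℝ] ℝ,
      HasFDerivAt (fun ζ => ∫ t in (0:ℝ)..1,
          fderiv ℝ f (ζ + (t-1) • ρc (ζ - p)) (Gc (ζ - p))) L z ∧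
      (∀ v, L (H.mulVec v) = fderiv ℝ f z v) ∧
      (z = p → ∀ v, L v = fderiv ℝ f p (Gc v)) := by
  have htop : ((⊤:ℕ∞) : WithTop ℕ∞) = ∞ := rfl
  rw [htop] at hf
  set Df : (Fin m → ℝ) → (Fin m → ℝ) →L[ℝ] ℝ := fderiv ℝ f with hDfdef
  set D2 : (Fin m → ℝ) → (Fin m → ℝ) →L[ℝ] ((Fin m → ℝ) →L[ℝ] ℝ) := fderiv ℝ Df with hD2def
  have hinfty1 : (∞ : WithTop ℕ∞) + 1 ≤ ∞ := by simp
  have hDf : ContDiffOn ℝ ∞ Df A := hf.fderiv_of_isOpen hA hinfty1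
  have hD2 : ContDiffOn ℝ ∞ D2 A := hDf.fderiv_of_isOpen hA hinfty1
  have hasDf : ∀ w ∈ A, HasFDerivAt f (Df w) w := fun w hw =>
    ((hf.differentiableOn (by simp)).differentiableAt (hA.mem_nhds hw)).hasFDerivAt
  have hasD2 : ∀ w ∈ A, HasFDerivAt Df (D2 w) w := fun w hw =>
    ((hDf.differentiableOn (by simp)).differentiableAt (hA.mem_nhds hw)).hasFDerivAt
  have hsymm : ∀ w ∈ A, ∀ v₁ v₂, D2 w v₁ v₂ = D2 w v₂ v₁ := by
    intro w hw v₁ v₂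
    exact second_derivative_symmetric_of_eventually
      (Filter.eventually_of_mem (hA.mem_nhds hw) (fun y hy => hasDf y hy)) (hasD2 w hw) v₁ v₂
  -- abbreviations
  set c : ℝ → (Fin m → ℝ) → (Fin m → ℝ) := fun t ζ => ζ + (t-1) • ρc (ζ - p) with hcdef
  set Bt : ℝ → (Fin m → ℝ) →L[ℝ] (Fin m → ℝ) :=
    fun t => ContinuousLinearMap.id ℝ _ + (t-1) • ρc with hBtdef
  set Ψ : (Fin m → ℝ) × ℝ → ℝ := fun q => Df (c q.2 q.1) (Gc (q.1 - p)) with hΨdef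
  set Ψ' : (Fin m → ℝ) × ℝ → (Fin m → ℝ) →L[ℝ] ℝ := fun q =>
    (Df (c q.2 q.1)).comp Gc + ((D2 (c q.2 q.1)).comp (Bt q.2)).flip (Gc (q.1 - p)) with hΨ'def
  have habs : ∀ t ∈ Set.Ioo (-1:ℝ) 2, |t| ≤ 2 := by
    intro t ht
    rw [abs_le]; constructor <;> [linarith [ht.1]; linarith [ht.2]]
  have hcmem : ∀ q ∈ U ×ˢ Set.Ioo (-1:ℝ) 2, c q.2 q.1 ∈ A := by
    intro q hq
    exact hcA q.1 hq.1 q.2 (habs q.2 hq.2)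
  have hccont : Continuous fun q : (Fin m → ℝ) × ℝ => c q.2 q.1 := by
    apply Continuous.add continuous_fst
    exact (continuous_snd.sub continuous_const).smul
      (ρc.continuous.comp (continuous_fst.sub continuous_const))
  -- HasFDerivAt of the integrand in ζ
  have hasBt : ∀ (t : ℝ) (ζ : Fin m → ℝ), HasFDerivAt (fun ζ' => c t ζ') (Bt t) ζ := by
    intro t ζ
    have h1 : HasFDerivAt (fun ζ' : Fin m → ℝ => ζ') (ContinuousLinearMap.id ℝ _) ζ :=
      hasFDerivAt_id ζ
    have h2 : HasFDerivAt (fun ζ' : Fin m → ℝ => (t-1) • ρc (ζ' - p)) ((t-1) • ρc) ζ := by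
      have : HasFDerivAt (fun ζ' : Fin m → ℝ => ρc (ζ' - p)) ρc ζ := by
        simpa using (ρc.hasFDerivAt (x := ζ - p)).comp ζ ((hasFDerivAt_id ζ).sub_const p)
      simpa using this.const_smul (t-1)
    exact h1.add h2
  have hasΨ' : ∀ q ∈ U ×ˢ Set.Ioo (-1:ℝ) 2, HasFDerivAt (fun ζ => Ψ (ζ, q.2)) (Ψ' q) q.1 := by
    rintro ⟨ζ, t⟩ hq
    have hc : HasFDerivAt (fun ζ' => Df (c t ζ')) ((D2 (c t ζ)).comp (Bt t)) ζ :=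
      (hasD2 _ (hcmem _ hq)).comp ζ (hasBt t ζ)
    have hu : HasFDerivAt (fun ζ' : Fin m → ℝ => Gc (ζ' - p)) Gc ζ := by
      simpa using (Gc.hasFDerivAt (x := ζ - p)).comp ζ ((hasFDerivAt_id ζ).sub_const p)
    exact hc.clm_apply hu
  have hIoo : IsOpen (Set.Ioo (-1:ℝ) 2) := isOpen_Ioo
  have hsub01 : Set.uIcc (0:ℝ) 1 ⊆ Set.Ioo (-1:ℝ) 2 := by
    rw [Set.uIcc_of_le (by norm_num : (0:ℝ) ≤ 1)]
    intro t ht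
    exact ⟨by linarith [ht.1], by linarith [ht.2]⟩
  have hDfc : ContinuousOn (fun q : (Fin m → ℝ) × ℝ => Df (c q.2 q.1))
      (U ×ˢ Set.Ioo (-1:ℝ) 2) :=
    hDf.continuousOn.comp hccont.continuousOn hcmem
  have hD2c : ContinuousOn (fun q : (Fin m → ℝ) × ℝ => D2 (c q.2 q.1))
      (U ×ˢ Set.Ioo (-1:ℝ) 2) :=
    hD2.continuousOn.comp hccont.continuousOn hcmem
  have hΨcont : ContinuousOn Ψ (U ×ˢ Set.Ioo (-1:ℝ) 2) := by
    apply hDfc.clm_apply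
    exact (Gc.continuous.comp (continuous_fst.sub continuous_const)).continuousOn
  have hΨ'cont : ContinuousOn Ψ' (U ×ˢ Set.Ioo (-1:ℝ) 2) := by
    apply ContinuousOn.add
    · exact hDfc.clm_comp continuousOn_const
    · apply ContinuousOn.clm_apply
      · have hflip : Continuous (fun M : (Fin m → ℝ) →L[ℝ] ((Fin m → ℝ) →L[ℝ] ℝ) => M.flip) :=
          (ContinuousLinearMap.flipₗᵢ ℝ (Fin m → ℝ) (Fin m → ℝ) ℝ).continuous
        apply hflip.comp_continuousOn
        apply hD2c.clm_comp
        have : Continuous (fun q : (Fin m → ℝ) × ℝ => Bt q.2) := by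
          apply continuous_const.add
          exact (continuous_snd.sub continuous_const).smul continuous_const
        exact this.continuousOn
      · exact (Gc.continuous.comp (continuous_fst.sub continuous_const)).continuousOn
  obtain ⟨hΨ'int, hΨint, hmain⟩ :=
    hasFDerivAt_parametric_intervalIntegral hUopen hsub01 hΨcont hΨ'cont hasΨ' hz
  have hΨ'zcont : ContinuousOn (fun t => Ψ' (z, t)) (Set.uIcc (0:ℝ) 1) :=
    hΨ'cont.comp (Continuous.continuousOn (by fun_prop)) (fun t ht => ⟨hz, hsub01 ht⟩)
  refine ⟨∫ t in (0:ℝ)..1, Ψ' (z, t), hmain, ?_, ?_⟩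
  · -- the PDE direction
    intro v
    rw [ContinuousLinearMap.intervalIntegral_apply hΨ'int]
    have huIcc_mem : ∀ t ∈ Set.uIcc (0:ℝ) 1, |t| ≤ 2 := by
      intro t ht
      rw [Set.uIcc_of_le (by norm_num : (0:ℝ) ≤ 1)] at ht
      rw [abs_le]; exact ⟨by linarith [ht.1], by linarith [ht.2]⟩
    have hwA : ∀ t ∈ Set.uIcc (0:ℝ) 1, c t z ∈ A := fun t ht =>
      hcA z hz t (huIcc_mem t ht)
    have claim : ∀ t ∈ Set.uIcc (0:ℝ) 1,
        HasDerivAt (fun s => s * Df (c s z) v) (Ψ' (z, t) (H.mulVec v)) t := by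
      intro t ht
      have hw : c t z ∈ A := hwA t ht
      -- derivative of s ↦ Df (c s z) v
      have hcs : HasDerivAt (fun s : ℝ => c s z) (ρc (z - p)) t := by
        have h1 : HasDerivAt (fun s : ℝ => (s - 1)) 1 t := (hasDerivAt_id t).sub_const 1
        have h2 : HasDerivAt (fun s : ℝ => (s - 1) • ρc (z - p))
            ((1:ℝ) • ρc (z - p)) t := h1.smul_const (ρc (z - p))
        have h3 := h2.const_add z
        rw [one_smul] at h3
        exact h3
      have hgt : HasDerivAt (fun s => Df (c s z) v) (D2 (c t z) (ρc (z - p)) v) t := by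
        have h4 : HasDerivAt (fun s => Df (c s z)) (D2 (c t z) (ρc (z - p))) t :=
          (hasD2 _ hw).comp_hasDerivAt t hcs
        have h5 := (ContinuousLinearMap.apply ℝ ℝ v).hasFDerivAt.comp_hasDerivAt t h4
        exact h5
      have hprod := (hasDerivAt_id t).mul hgt
      have hval : Ψ' (z, t) (H.mulVec v)
          = 1 * Df (c t z) v + t * D2 (c t z) (ρc (z - p)) v := by
        have e1 : Ψ' (z, t) (H.mulVec v)
            = Df (c t z) (Gc (H.mulVec v)) + D2 (c t z) (Bt t (H.mulVec v)) (Gc (z - p)) := rfl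
        have e2 : Df (c t z) (Gc (H.mulVec v)) = Df (c t z) v := by
          have hker0 : H.mulVec (Gc (H.mulVec v) - v) = 0 := by
            rw [Matrix.mulVec_sub, hHG, hρH, sub_self]
          have := hker _ hw _ hker0
          rw [map_sub] at this
          linarith [this]
        have e3 : Bt t (H.mulVec v) = t • H.mulVec v := by
          have : Bt t (H.mulVec v) = H.mulVec v + (t - 1) • ρc (H.mulVec v) := rfl
          rw [this, hρH]
          module
        have e4 : D2 (c t z) (Bt t (H.mulVec v)) (Gc (z - p))
            = t * D2 (c t z) (H.mulVec v) (Gc (z - p)) := by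
          rw [e3, _root_.map_smul]
          simp
        have e5 : D2 (c t z) (H.mulVec v) (Gc (z - p)) = D2 (c t z) (ρc (z - p)) v := by
          rw [hsymm _ hw (H.mulVec v) (Gc (z - p))]
          rw [hclosed _ hw (Gc (z - p)) v]
          rw [hHG]
          exact hsymm _ hw v (ρc (z - p))
        rw [e1, e2, e4, e5]
        ring
      rw [hval]
      exact hprod
    have hintv : IntervalIntegrable (fun t => Ψ' (z, t) (H.mulVec v))
        MeasureTheory.volume 0 1 :=
      (hΨ'zcont.clm_apply continuousOn_const).intervalIntegrable
    rw [intervalIntegral.integral_eq_sub_of_hasDerivAt claim hintv]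
    have hc1 : c 1 z = z := by simp [hcdef]
    have hc0cancel : (1:ℝ) * Df (c 1 z) v - 0 * Df (c 0 z) v = Df z v := by
      rw [hc1]; ring
    simpa using hc0cancel
  · -- values at the center point
    intro hzp v
    subst hzp
    rw [ContinuousLinearMap.intervalIntegral_apply hΨ'int]
    have hpp : ∀ t : ℝ, c t z = z := by
      intro t; simp [hcdef]
    have : ∀ t : ℝ, Ψ' (z, t) v = Df z (Gc v) := by
      intro t
      have e1 : Ψ' (z, t) v
          = Df (c t z) (Gc v) + D2 (c t z) (Bt t v) (Gc (z - z)) := rfl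
      rw [e1, hpp t]
      simp
    simp only [this]
    simp

lemma tilde_smooth {m k : ℕ} {A : Set (Fin m → ℝ)} (hA : IsOpen A)
    {T : Set (Fin k → ℝ)} (hT : IsOpen T)
    {g : (Fin m → ℝ) × (Fin k → ℝ) → ℝ} (hg : ContDiffOn ℝ (⊤:ℕ∞) g (A ×ˢ T))
    {p : Fin m → ℝ} (ρc Gc : (Fin m → ℝ) →L[ℝ] (Fin m → ℝ))
    {U : Set (Fin m → ℝ)} (hUopen : IsOpen U)
    (hcA : ∀ z ∈ U, ∀ t : ℝ, |t| ≤ 2 → (z + (t-1) • ρc (z - p)) ∈ A) :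
    ContDiffOn ℝ (⊤:ℕ∞) (fun x : (Fin m → ℝ) × (Fin k → ℝ) => ∫ t in (0:ℝ)..1,
      (fderiv ℝ (fun w => g (w, x.2)) (x.1 + (t-1) • ρc (x.1 - p))) (Gc (x.1 - p)))
      (U ×ˢ T) := by
  have htop : ((⊤:ℕ∞) : WithTop ℕ∞) = ∞ := rfl
  rw [htop] at hg ⊢
  have hAT : IsOpen (A ×ˢ T) := hA.prod hT
  have hinfty1 : (∞ : WithTop ℕ∞) + 1 ≤ ∞ := by simp
  have hdiff : DifferentiableOn ℝ g (A ×ˢ T) := hg.differentiableOn (by simp)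
  set PF : (Fin m → ℝ) × (Fin k → ℝ) → ((Fin m → ℝ) →L[ℝ] ℝ) :=
    fun x => (fderiv ℝ g x).comp (ContinuousLinearMap.inl ℝ _ _) with hPFdef
  have hPF : ContDiffOn ℝ ∞ PF (A ×ˢ T) :=
    (hg.fderiv_of_isOpen hAT hinfty1).clm_comp contDiffOn_const
  have hPFeq : ∀ x ∈ A ×ˢ T, fderiv ℝ (fun w => g (w, x.2)) x.1 = PF x := by
    intro x hx
    exact (((hdiff.differentiableAt (hAT.mem_nhds hx)).hasFDerivAt).comp x.1
      (hasFDerivAt_prodMk_left x.1 x.2)).fderiv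
  set cm : (Fin m → ℝ) → ℝ → (Fin m → ℝ) := fun z t => z + (t-1) • ρc (z - p) with hcm
  have habs : ∀ t ∈ Set.Ioo (-1:ℝ) 2, |t| ≤ 2 := by
    intro t ht
    rw [abs_le]; exact ⟨by linarith [ht.1], by linarith [ht.2]⟩
  have hsub01 : Set.uIcc (0:ℝ) 1 ⊆ Set.Ioo (-1:ℝ) 2 := by
    rw [Set.uIcc_of_le (by norm_num : (0:ℝ) ≤ 1)]
    intro t ht
    exact ⟨by linarith [ht.1], by linarith [ht.2]⟩
  set Ψ : ((Fin m → ℝ) × (Fin k → ℝ)) × ℝ → ℝ :=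
    fun x => (PF (cm x.1.1 x.2, x.1.2)) (Gc (x.1.1 - p)) with hΨdef
  have hinner : ContDiff ℝ ∞ (fun x : ((Fin m → ℝ) × (Fin k → ℝ)) × ℝ =>
      ((cm x.1.1 x.2, x.1.2) : (Fin m → ℝ) × (Fin k → ℝ))) := by
    apply ContDiff.prodMk
    · apply ContDiff.add
      · exact contDiff_fst.comp contDiff_fst
      · exact (contDiff_snd.sub contDiff_const).smul
          (ρc.contDiff.comp ((contDiff_fst.comp contDiff_fst).sub contDiff_const))
    · exact contDiff_snd.comp contDiff_fst
  have hmaps : ∀ x ∈ (U ×ˢ T) ×ˢ Set.Ioo (-1:ℝ) 2,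
      ((cm x.1.1 x.2, x.1.2) : (Fin m → ℝ) × (Fin k → ℝ)) ∈ A ×ˢ T := by
    rintro ⟨⟨z, y⟩, t⟩ ⟨⟨hzU, hyT⟩, ht⟩
    exact ⟨hcA z hzU t (habs t ht), hyT⟩
  have hΨsm : ContDiffOn ℝ ∞ Ψ ((U ×ˢ T) ×ˢ Set.Ioo (-1:ℝ) 2) := by
    apply ContDiffOn.clm_apply
    · exact hPF.comp hinner.contDiffOn hmaps
    · apply ContDiff.contDiffOn
      exact Gc.contDiff.comp (((contDiff_fst.comp contDiff_fst)).sub contDiff_const)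
  have hint := contDiffOn_parametric_intervalIntegral_top (hUopen.prod hT) isOpen_Ioo
    hsub01 (Ψ := Ψ) (by rw [htop]; exact hΨsm)
  rw [htop] at hint
  apply hint.congr
  intro x hx
  apply intervalIntegral.integral_congr
  intro t ht
  have hmem : ((cm x.1 t, x.2) : (Fin m → ℝ) × (Fin k → ℝ)) ∈ A ×ˢ T := by
    refine ⟨hcA x.1 hx.1 t ?_, hx.2⟩
    rw [Set.uIcc_of_le (by norm_num : (0:ℝ) ≤ 1)] at ht
    rw [abs_le]; exact ⟨by linarith [ht.1], by linarith [ht.2]⟩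
  have := hPFeq (cm x.1 t, x.2) hmem
  simp only [hΨdef]
  rw [← this]

lemma phi_smooth {m k : ℕ} {B : Type*} [TopologicalSpace B] [ChartedSpace (Fin k → ℝ) B]
    [IsManifold (modelWithCornersSelf ℝ (Fin k → ℝ)) (⊤ : ℕ∞) B]
    {A : Set (Fin m → ℝ)} (hA : IsOpen A)
    {h : (Fin m → ℝ) × B → ℝ}
    (hh : ContMDiffOn
      ((modelWithCornersSelf ℝ (Fin m → ℝ)).prod (modelWithCornersSelf ℝ (Fin k → ℝ)))
      (modelWithCornersSelf ℝ ℝ) (⊤ : ℕ∞) h (A ×ˢ (Set.univ : Set B)))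
    {p : Fin m → ℝ} (ρc Gc : (Fin m → ℝ) →L[ℝ] (Fin m → ℝ))
    {U : Set (Fin m → ℝ)} (hUopen : IsOpen U)
    (hcA : ∀ z ∈ U, ∀ t : ℝ, |t| ≤ 2 → (z + (t-1) • ρc (z - p)) ∈ A) :
    ContMDiffOn
      ((modelWithCornersSelf ℝ (Fin m → ℝ)).prod (modelWithCornersSelf ℝ (Fin k → ℝ)))
      (modelWithCornersSelf ℝ ℝ) (⊤ : ℕ∞)
      (fun x : (Fin m → ℝ) × B => ∫ t in (0:ℝ)..1,
        (fderiv ℝ (fun w => h (w, x.2)) (x.1 + (t-1) • ρc (x.1 - p))) (Gc (x.1 - p)))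
      (U ×ˢ (Set.univ : Set B)) := by
  rintro ⟨z₀, u₀⟩ ⟨hz₀, -⟩
  apply ContMDiffAt.contMDiffWithinAt
  set J := modelWithCornersSelf ℝ (Fin k → ℝ) with hJ
  set e := extChartAt J u₀ with he
  have hu₀ : u₀ ∈ e.source := mem_extChartAt_source u₀
  have hTopen : IsOpen e.target := isOpen_extChartAt_target u₀
  set g : (Fin m → ℝ) × (Fin k → ℝ) → ℝ := fun x => h (x.1, e.symm x.2) with hg
  have hinner : ContMDiffOn
      ((modelWithCornersSelf ℝ (Fin m → ℝ)).prod J)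
      ((modelWithCornersSelf ℝ (Fin m → ℝ)).prod J) (⊤ : ℕ∞)
      (fun x : (Fin m → ℝ) × (Fin k → ℝ) => ((x.1, e.symm x.2) : (Fin m → ℝ) × B))
      (A ×ˢ e.target) := by
    apply ContMDiffOn.prodMk
    · exact contMDiff_fst.contMDiffOn
    · exact (contMDiffOn_extChartAt_symm u₀).comp contMDiff_snd.contMDiffOn
        (fun x hx => hx.2)
  have h1 : ContMDiffOn
      ((modelWithCornersSelf ℝ (Fin m → ℝ)).prod J)
      (modelWithCornersSelf ℝ ℝ) (⊤ : ℕ∞) g (A ×ˢ e.target) :=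
    hh.comp hinner (fun x hx => ⟨hx.1, Set.mem_univ _⟩)
  have hgsm : ContDiffOn ℝ (⊤:ℕ∞) g (A ×ˢ e.target) := by
    have h2 : ContMDiffOn (modelWithCornersSelf ℝ ((Fin m → ℝ) × (Fin k → ℝ)))
        (modelWithCornersSelf ℝ ℝ) (⊤ : ℕ∞) g (A ×ˢ e.target) := by
      rw [modelWithCornersSelf_prod, ← chartedSpaceSelf_prod]
      exact h1
    exact h2.contDiffOn
  have hphsm := tilde_smooth hA hTopen hgsm ρc Gc hUopen hcA
  have hphm : ContMDiffOn
      ((modelWithCornersSelf ℝ (Fin m → ℝ)).prod J) (modelWithCornersSelf ℝ ℝ) (⊤ : ℕ∞)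
      (fun x : (Fin m → ℝ) × (Fin k → ℝ) => ∫ t in (0:ℝ)..1,
        (fderiv ℝ (fun w => g (w, x.2)) (x.1 + (t-1) • ρc (x.1 - p))) (Gc (x.1 - p)))
      (U ×ˢ e.target) := by
    rw [← modelWithCornersSelf_prod, chartedSpaceSelf_prod]
    exact hphsm.contMDiffOn
  have hphat := hphm.contMDiffAt
    ((hUopen.prod hTopen).mem_nhds (x := (z₀, e u₀)) ⟨hz₀, mem_extChartAt_target u₀⟩)
  have hEmap : ContMDiffAt
      ((modelWithCornersSelf ℝ (Fin m → ℝ)).prod J)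
      ((modelWithCornersSelf ℝ (Fin m → ℝ)).prod J) (⊤ : ℕ∞)
      (fun x : (Fin m → ℝ) × B => ((x.1, e x.2) : (Fin m → ℝ) × (Fin k → ℝ)))
      (z₀, u₀) := by
    apply ContMDiffAt.prodMk
    · exact contMDiff_fst.contMDiffAt
    · exact (contMDiffAt_extChartAt (x := u₀)).comp (z₀, u₀) contMDiff_snd.contMDiffAt
  have hcomp := hphat.comp (z₀, u₀) hEmap
  apply hcomp.congr_of_eventuallyEq
  apply Filter.eventuallyEq_of_mem
    ((hUopen.prod (isOpen_extChartAt_source u₀)).mem_nhds ⟨hz₀, hu₀⟩)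
  rintro ⟨z, u⟩ ⟨-, hu⟩
  have hgu : (fun w => g (w, e u)) = fun w => h (w, u) := by
    funext w
    simp only [hg]
    rw [e.left_inv hu]
  simp only [Function.comp_apply]
  rw [hgu]

end Aux

lemma gradZb_dot {m : ℕ} {B : Type*} (g : (Fin m → ℝ) × B → ℝ)
    (z : Fin m → ℝ) (u : B) (v : Fin m → ℝ) :
    gradZb g z u ⬝ᵥ v = fderiv ℝ (fun w => g (w, u)) z v := by
  rw [clm_eq_sum_single (fderiv ℝ (fun w => g (w, u)) z) v]
  simp only [dotProduct, gradZb]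
  exact Finset.sum_congr rfl fun i _ => mul_comm _ _

/-- Lemma 4.3: with `H` a constant nilpotent matrix and `h` smooth with `dh(Ker H) = 0` and
`d(dh∘H) = 0` along the fibers, near `{p} × K` there is a smooth `φ` with `dφ∘H = dh` along
the fibers, `φ(p,·) = 0`, and `dφ(p,u) = 0` whenever `dh(p,u) = 0`. -/
theorem lemma_4_3 {m q : ℕ} {B : Type*} [TopologicalSpace B]
    [ChartedSpace (Fin q → ℝ) B]
    [IsManifold (modelWithCornersSelf ℝ (Fin q → ℝ)) (⊤ : ℕ∞) B]
    (A : Set (Fin m → ℝ)) (hA : IsOpen A)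
    (H : Matrix (Fin m) (Fin m) ℝ) (hnil : IsNilpotent H)
    (p : Fin m → ℝ) (hp : p ∈ A) (K : Set B) (hK : IsCompact K)
    (h : (Fin m → ℝ) × B → ℝ)
    (hh : ContMDiffOn
      ((modelWithCornersSelf ℝ (Fin m → ℝ)).prod (modelWithCornersSelf ℝ (Fin q → ℝ)))
      (modelWithCornersSelf ℝ ℝ) (⊤ : ℕ∞) h (A ×ˢ (Set.univ : Set B)))
    (hker : ∀ z ∈ A, ∀ u : B, ∀ v : Fin m → ℝ,
      H.mulVec v = 0 → gradZb h z u ⬝ᵥ v = 0)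
    (hclosed : ∀ z ∈ A, ∀ u : B, ∀ v w : Fin m → ℝ,
      (fderiv ℝ (fun z' => Hᵀ.mulVec (gradZb h z' u)) z v) ⬝ᵥ w
        = (fderiv ℝ (fun z' => Hᵀ.mulVec (gradZb h z' u)) z w) ⬝ᵥ v) :
    ∃ U : Set (Fin m → ℝ), IsOpen U ∧ p ∈ U ∧ U ⊆ A ∧
      ∃ V : Set B, IsOpen V ∧ K ⊆ V ∧
        ∃ φ : (Fin m → ℝ) × B → ℝ,
          ContMDiffOn
            ((modelWithCornersSelf ℝ (Fin m → ℝ)).prod (modelWithCornersSelf ℝ (Fin q → ℝ)))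
            (modelWithCornersSelf ℝ ℝ) (⊤ : ℕ∞) φ (U ×ˢ V) ∧
          (∀ z ∈ U, ∀ u ∈ V, Hᵀ.mulVec (gradZb φ z u) = gradZb h z u) ∧
          (∀ u ∈ V, φ (p, u) = 0) ∧
          (∀ u ∈ V, gradZb h p u = 0 → gradZb φ p u = 0) := by
  classical
  -- linear algebra: a projection onto the range of `H` and a pseudo-inverse
  obtain ⟨ρc, Gc, hHG, hρH, hρρ⟩ :
      ∃ (ρc Gc : (Fin m → ℝ) →L[ℝ] (Fin m → ℝ)),
        (∀ v, H.mulVec (Gc v) = ρc v) ∧ (∀ v, ρc (H.mulVec v) = H.mulVec v)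
          ∧ (∀ v, ρc (ρc v) = ρc v) := by
    set Hl : (Fin m → ℝ) →ₗ[ℝ] (Fin m → ℝ) := Matrix.mulVecLin H with hHl
    obtain ⟨Csub, hC⟩ := Submodule.exists_isCompl (LinearMap.range Hl)
    set pr := (LinearMap.range Hl).linearProjOfIsCompl Csub hC with hpr
    obtain ⟨gi, hgi⟩ := Hl.rangeRestrict.exists_rightInverse_of_surjective
      (LinearMap.range_rangeRestrict Hl)
    refine ⟨LinearMap.toContinuousLinearMap ((LinearMap.range Hl).subtype ∘ₗ pr),
      LinearMap.toContinuousLinearMap (gi ∘ₗ pr), ?_, ?_, ?_⟩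
    · intro v
      have h1 : H.mulVec (gi (pr v)) = Hl (gi (pr v)) := rfl
      have h2 : Hl (gi (pr v)) = (Hl.rangeRestrict (gi (pr v)) : Fin m → ℝ) := rfl
      have h3 : Hl.rangeRestrict (gi (pr v)) = pr v := by
        have := congrArg (fun f => f (pr v)) hgi
        exact this
      simp [LinearMap.toContinuousLinearMap, h1, h2, h3]
    · intro v
      have hmem : H.mulVec v ∈ LinearMap.range Hl := ⟨v, rfl⟩
      simp only [LinearMap.coe_toContinuousLinearMap', LinearMap.coe_comp,
        Function.comp_apply]
      rw [show pr (H.mulVec v) = ⟨H.mulVec v, hmem⟩ from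
        Submodule.linearProjOfIsCompl_apply_left hC ⟨H.mulVec v, hmem⟩]
      rfl
    · intro v
      simp only [LinearMap.coe_toContinuousLinearMap', LinearMap.coe_comp,
        Function.comp_apply]
      rw [show pr ((LinearMap.range Hl).subtype (pr v)) = pr v from
        Submodule.linearProjOfIsCompl_apply_left hC (pr v)]
  -- the neighbourhood `U`
  obtain ⟨ε, hε, hball⟩ : ∃ ε > 0, Metric.ball p ε ⊆ A := by
    rcases Metric.isOpen_iff.mp hA p hp with ⟨r, hr, hrsub⟩
    exact ⟨r, hr, hrsub⟩
  set U : Set (Fin m → ℝ) :=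
    {z | ‖ρc (z - p)‖ < ε/4 ∧ ‖(z - p) - ρc (z - p)‖ < ε/2} with hUdef
  have hUopen : IsOpen U := by
    have hcont1 : Continuous fun z : Fin m → ℝ => ‖ρc (z - p)‖ :=
      (ρc.continuous.comp (continuous_id.sub continuous_const)).norm
    have hcont2 : Continuous fun z : Fin m → ℝ => ‖(z - p) - ρc (z - p)‖ :=
      ((continuous_id.sub continuous_const).sub
        (ρc.continuous.comp (continuous_id.sub continuous_const))).norm
    rw [hUdef, Set.setOf_and]
    exact (isOpen_lt hcont1 continuous_const).inter (isOpen_lt hcont2 continuous_const)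
  have hpU : p ∈ U := by
    constructor <;> simp [hUdef] <;> positivity
  have hcA : ∀ z ∈ U, ∀ t : ℝ, |t| ≤ 2 → (z + (t-1) • ρc (z - p)) ∈ A := by
    intro z hz t ht
    apply hball
    rw [Metric.mem_ball, dist_eq_norm]
    have hrw : z + (t-1) • ρc (z - p) - p
        = ((z - p) - ρc (z - p)) + t • ρc (z - p) := by module
    rw [hrw]
    have h1 : ‖((z - p) - ρc (z - p)) + t • ρc (z - p)‖
        ≤ ‖(z - p) - ρc (z - p)‖ + ‖t • ρc (z - p)‖ := norm_add_le _ _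
    have h2 : ‖t • ρc (z - p)‖ = |t| * ‖ρc (z - p)‖ := by
      rw [norm_smul, Real.norm_eq_abs]
    have h3 : |t| * ‖ρc (z - p)‖ ≤ 2 * ‖ρc (z - p)‖ :=
      mul_le_mul_of_nonneg_right ht (norm_nonneg _)
    have h4 := hz.1
    have h5 := hz.2
    calc ‖((z - p) - ρc (z - p)) + t • ρc (z - p)‖
        ≤ ‖(z - p) - ρc (z - p)‖ + |t| * ‖ρc (z - p)‖ := by rw [← h2]; exact h1
      _ ≤ ‖(z - p) - ρc (z - p)‖ + 2 * ‖ρc (z - p)‖ := by linarith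
      _ < ε/2 + 2 * (ε/4) := by
          have := mul_lt_mul_of_pos_left h4 (show (0:ℝ) < 2 by norm_num)
          linarith
      _ = ε := by ring
  have hUA : U ⊆ A := by
    intro z hz
    have := hcA z hz 1 (by norm_num)
    simpa using this
  -- the function φ
  set φ : (Fin m → ℝ) × B → ℝ := fun x => ∫ t in (0:ℝ)..1,
    (fderiv ℝ (fun w => h (w, x.2)) (x.1 + (t-1) • ρc (x.1 - p))) (Gc (x.1 - p)) with hφdef
  -- fixed-parameter facts
  have hslice : ∀ u : B, ContDiffOn ℝ (⊤:ℕ∞) (fun w => h (w, u)) A := by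
    intro u
    have hinner : ContMDiffOn (modelWithCornersSelf ℝ (Fin m → ℝ))
        ((modelWithCornersSelf ℝ (Fin m → ℝ)).prod (modelWithCornersSelf ℝ (Fin q → ℝ)))
        (⊤ : ℕ∞) (fun w : Fin m → ℝ => ((w, u) : (Fin m → ℝ) × B)) A :=
      (contMDiff_id.contMDiffOn).prodMk contMDiffOn_const
    exact (hh.comp hinner (fun w hw => ⟨hw, Set.mem_univ _⟩)).contDiffOn
  have hkey : ∀ u : B, ∀ z ∈ U,
      ∃ L : (Fin m → ℝ) →L[ℝ] ℝ,
        HasFDerivAt (fun ζ => φ (ζ, u)) L z ∧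
        (∀ v, L (H.mulVec v) = fderiv ℝ (fun w => h (w, u)) z v) ∧
        (z = p → ∀ v, L v = fderiv ℝ (fun w => h (w, u)) p (Gc v)) := by
    intro u z hz
    have hker' : ∀ z' ∈ A, ∀ v, H.mulVec v = 0 →
        fderiv ℝ (fun w => h (w, u)) z' v = 0 := by
      intro z' hz' v hv
      have := hker z' hz' u v hv
      rwa [gradZb_dot] at this
    have hclosed' : ∀ z' ∈ A, ∀ v w,
        fderiv ℝ (fderiv ℝ (fun w' => h (w', u))) z' v (H.mulVec w)
          = fderiv ℝ (fderiv ℝ (fun w' => h (w', u))) z' w (H.mulVec v) := by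
      intro z' hz'
      exact hclosed_translate hA (hslice u) hz' (fun v w => hclosed z' hz' u v w)
    exact key_slice hA hHG hρH (hslice u) hker' hclosed' hUopen hUA hcA hz
  refine ⟨U, hUopen, hpU, hUA, Set.univ, isOpen_univ, Set.subset_univ K, φ, ?_, ?_, ?_, ?_⟩
  · exact phi_smooth hA hh ρc Gc hUopen hcA
  · -- the PDE
    intro z hz u _
    obtain ⟨L, hL, hLH, -⟩ := hkey u z hz
    funext i
    rw [mulVec_transpose_entry, gradZb_dot, hL.fderiv]
    rw [hLH (Pi.single i 1)]
    rfl
  · -- φ (p, ·) = 0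
    intro u _
    have : ∀ t : ℝ, (fderiv ℝ (fun w => h (w, u)) (p + (t-1) • ρc (p - p)))
        (Gc (p - p)) = 0 := by
      intro t
      simp
    simp only [hφdef, this]
    simp
  · -- gradient vanishing at the center
    intro u _ hgrad0
    obtain ⟨L, hL, -, hLp⟩ := hkey u p hpU
    funext i
    have h1 : gradZb φ p u i = L (Pi.single i 1) := by
      have : gradZb φ p u i
          = fderiv ℝ (fun ζ => φ (ζ, u)) p (Pi.single i 1) := rfl
      rw [this, hL.fderiv]
    rw [h1, hLp rfl (Pi.single i 1)]
    have h2 : fderiv ℝ (fun w => h (w, u)) p (Gc (Pi.single i 1))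
        = gradZb h p u ⬝ᵥ Gc (Pi.single i 1) := (gradZb_dot h p u _).symm
    rw [h2, hgrad0]
    simp
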